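/- The holomorphic polynomial map C : ℂ³ → ℂ³ given by C(z₁,z₂,z₃) = ((1/√2)(z₁+z₂+(3/2)z₁²), (1/√2)(z₁−z₂−(3/2)z₁²), 4z₃−2z₁z₂−z₁³) satisfies, for all z ∈ ℂ³: Re(C₃(z)) − |C₁(z)|² + |C₂(z)|² = 4(Re z₃ − Re z₁ · Re z₂ − (Re z₁)³). -/

import Mathlib

open Complex

/-- The polynomial map transforming the tube over the Cayley surface
`x₃ = x₁x₂ + x₁³` into the quadric `Re z₃ = |z₁|² − |z₂|²`. -/
theorem cayley_tube_to_quadric_identity (z₁ z₂ z₃ : ℂ) :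
    let C₁ := (1 / (Real.sqrt 2 : ℂ)) * (z₁ + z₂ + (3 / 2) * z₁ ^ 2)
    let C₂ := (1 / (Real.sqrt 2 : ℂ)) * (z₁ - z₂ - (3 / 2) * z₁ ^ 2)
    let C₃ := 4 * z₃ - 2 * z₁ * z₂ - z₁ ^ 3
    C₃.re - ‖C₁‖ ^ 2 + ‖C₂‖ ^ 2 =
      4 * (z₃.re - z₁.re * z₂.re - z₁.re ^ 3) := by
  intro C₁ C₂ C₃
  have hn : Complex.normSq (1 / (Real.sqrt 2 : ℂ)) = 1 / 2 := by
    rw [map_div₀, map_one, Complex.normSq_ofReal, Real.mul_self_sqrt (by norm_num)]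
  have e1 : ‖C₁‖ ^ 2 = Complex.normSq (z₁ + z₂ + (3 / 2) * z₁ ^ 2) / 2 := by
    rw [Complex.sq_norm, show C₁ = _ from rfl, Complex.normSq_mul, hn]; ring
  have e2 : ‖C₂‖ ^ 2 = Complex.normSq (z₁ - z₂ - (3 / 2) * z₁ ^ 2) / 2 := by
    rw [Complex.sq_norm, show C₂ = _ from rfl, Complex.normSq_mul, hn]; ring
  have h32re : ((3 / 2 : ℂ)).re = 3 / 2 := by norm_num
  have h32im : ((3 / 2 : ℂ)).im = 0 := by norm_num
  have hsq : ∀ x : ℂ, (x ^ 2).re = x.re ^ 2 - x.im ^ 2 := by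
    intro x; rw [sq, Complex.mul_re]; ring
  have hsqi : ∀ x : ℂ, (x ^ 2).im = 2 * x.re * x.im := by
    intro x; rw [sq, Complex.mul_im]; ring
  have hcu : ∀ x : ℂ, (x ^ 3).re = x.re ^ 3 - 3 * x.re * x.im ^ 2 := by
    intro x; rw [pow_succ, Complex.mul_re, hsq, hsqi]; ring
  rw [e1, e2]
  simp only [C₃, Complex.normSq_apply, Complex.sub_re, Complex.sub_im, Complex.add_re,
    Complex.add_im, Complex.mul_re, Complex.mul_im, Complex.re_ofNat, Complex.im_ofNat,
    h32re, h32im, hsq, hsqi, hcu]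
  ring
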